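/- arXiv:1309.4375 — 3 statements merged into one kernel-verified Lean document; each statement's English description precedes it below -/
import Mathlib

section
/- Suppose the complex hyperplane {λ_1 z_1 + ... + λ_n z_n + 1 = 0} is contained in σ_p(A_1,...,A_n), λ_1 = 0, and λ_2 ≠ 0. Then the operator A_1 is not bounded below; that is, for every δ > 0 there exists a unit vector x with ‖A_1 x‖ < δ. -/
theorem stmt4 {H : Type*} [NormedAddCommGroup H] [InnerProductSpace ℂ H] [CompleteSpace H]
    {n : ℕ} (A : Fin (n + 2) → H →L[ℂ] H) (lam : Fin (n + 2) → ℂ)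
    (hplane : ∀ z : Fin (n + 2) → ℂ, ∑ i, lam i * z i + 1 = 0 →
      LinearMap.ker (((1 : H →L[ℂ] H) + ∑ i, z i • A i : H →L[ℂ] H) : H →ₗ[ℂ] H) ≠ ⊥)
    (h1 : lam 0 = 0) (h2 : lam 1 ≠ 0) :
    ∀ δ > 0, ∃ x : H, ‖x‖ = 1 ∧ ‖A 0 x‖ < δ := by
  intro δ hδ
  set c : ℂ := -(lam 1)⁻¹ with hc
  set C : ℝ := 1 + ‖c‖ * ‖A 1‖ with hC
  have hCpos : 0 < C := by positivity
  set T : ℝ := C / δ + 1 with hT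
  have hTpos : 0 < T := by positivity
  set z : Fin (n + 2) → ℂ := fun i => if i = 0 then (T : ℂ) else if i = 1 then c else 0 with hz
  have hsum : ∑ i, lam i * z i + 1 = 0 := by
    have : ∑ i, lam i * z i = lam 0 * T + lam 1 * c := by
      rw [Fin.sum_univ_succ, Fin.sum_univ_succ]
      have : ∀ i : Fin n, z i.succ.succ = 0 := by
        intro i
        simp only [hz]
        rw [if_neg (Fin.succ_ne_zero _), if_neg (Fin.succ_succ_ne_one i)]
      simp [this, hz, Fin.succ_ne_zero, Fin.succ_succ_ne_one]
    rw [this, h1, hc]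
    field_simp
    ring
  have hker := hplane z hsum
  rw [Submodule.ne_bot_iff] at hker
  obtain ⟨x, hx, hx0⟩ := hker
  have hxnorm : 0 < ‖x‖ := norm_pos_iff.mpr hx0
  have hopsum : ∑ i, z i • A i = (T : ℂ) • A 0 + c • A 1 := by
    rw [Fin.sum_univ_succ, Fin.sum_univ_succ]
    have : ∀ i : Fin n, z i.succ.succ = 0 := by
      intro i
      simp only [hz]
      rw [if_neg (Fin.succ_ne_zero _), if_neg (Fin.succ_succ_ne_one i)]
    simp [this, hz, Fin.succ_ne_zero, Fin.succ_succ_ne_one]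
  rw [LinearMap.mem_ker] at hx
  have hx' : x + ((T : ℂ) • A 0 x + c • A 1 x) = 0 := by
    have := hx
    rw [hopsum] at this
    simpa using this
  have heq : (T : ℂ) • A 0 x = -(x + c • A 1 x) := by
    have : x + c • A 1 x + (T : ℂ) • A 0 x = 0 := by
      rw [← hx']; abel
    linear_combination (norm := abel) this
  have hnorm : T * ‖A 0 x‖ ≤ C * ‖x‖ := by
    have h1' : ‖(T : ℂ) • A 0 x‖ = T * ‖A 0 x‖ := by
      rw [norm_smul, Complex.norm_real, Real.norm_eq_abs, abs_of_pos hTpos]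
    have h2' : ‖-(x + c • A 1 x)‖ ≤ ‖x‖ + ‖c‖ * (‖A 1‖ * ‖x‖) := by
      rw [norm_neg]
      refine (norm_add_le _ _).trans ?_
      gcongr
      rw [norm_smul]
      gcongr
      exact (A 1).le_opNorm x
    calc T * ‖A 0 x‖ = ‖(T : ℂ) • A 0 x‖ := h1'.symm
      _ = ‖-(x + c • A 1 x)‖ := by rw [heq]
      _ ≤ ‖x‖ + ‖c‖ * (‖A 1‖ * ‖x‖) := h2'
      _ = C * ‖x‖ := by rw [hC]; ring
  refine ⟨((‖x‖ : ℂ))⁻¹ • x, ?_, ?_⟩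
  · rw [norm_smul, norm_inv, Complex.norm_real, Real.norm_eq_abs, abs_of_pos hxnorm,
      inv_mul_cancel₀ hxnorm.ne']
  · rw [map_smul, norm_smul, norm_inv, Complex.norm_real, Real.norm_eq_abs, abs_of_pos hxnorm]
    have hA0 : ‖A 0 x‖ ≤ C * ‖x‖ / T := by
      rw [le_div_iff₀ hTpos]
      linarith [hnorm]
    have : ‖x‖⁻¹ * ‖A 0 x‖ ≤ C / T := by
      rw [inv_mul_le_iff₀ hxnorm]
      calc ‖A 0 x‖ ≤ C * ‖x‖ / T := hA0
        _ = ‖x‖ * (C / T) := by ring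
    refine this.trans_lt ?_
    rw [div_lt_iff₀ hTpos, hT]
    have : C / δ * δ = C := by field_simp
    nlinarith
end

section
/- If λ_1 = 0, the complex hyperplane {λ_1 z_1 + ... + λ_n z_n + 1 = 0} (with some λ_k ≠ 0, k ≥ 2) is contained in σ_p(A_1,...,A_n), and A_1 has closed range, then 0 is an eigenvalue of A_1. -/
theorem stmt5 {H : Type*} [NormedAddCommGroup H] [InnerProductSpace ℂ H] [CompleteSpace H]
    {n : ℕ} (A : Fin n → H →L[ℂ] H) (lam : Fin n → ℂ)
    (hplane : ∀ z : Fin n → ℂ, ∑ i, lam i * z i + 1 = 0 →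
      LinearMap.ker (((1 : H →L[ℂ] H) + ∑ i, z i • A i : H →L[ℂ] H) : H →ₗ[ℂ] H) ≠ ⊥)
    (i₀ : Fin n) (h1 : lam i₀ = 0) (h2 : ∃ k, k ≠ i₀ ∧ lam k ≠ 0)
    (hrange : IsClosed (LinearMap.range (A i₀ : H →ₗ[ℂ] H) : Set H)) :
    Module.End.HasEigenvalue ((A i₀ : H →ₗ[ℂ] H)) 0 := by
  obtain ⟨k, hki, hlk⟩ := h2
  have hik : i₀ ≠ k := Ne.symm hki
  rw [Module.End.hasEigenvalue_iff]
  intro heig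
  -- A i₀ is injective
  have hker : LinearMap.ker ((A i₀ : H →ₗ[ℂ] H)) = ⊥ := by
    simpa [Module.End.eigenspace_zero] using heig
  have hinj : Function.Injective (A i₀) := LinearMap.ker_eq_bot.mp hker
  have hrange' : IsClosed (Set.range (A i₀)) := by
    simpa [LinearMap.coe_range] using hrange
  -- antilipschitz bound
  set e := (A i₀).equivRange hinj hrange' with he
  obtain ⟨c, hcal⟩ : ∃ c : NNReal, AntilipschitzWith c e := ⟨_, e.antilipschitz⟩
  have hc : ∀ x : H, ‖x‖ ≤ c * ‖A i₀ x‖ := by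
    intro x
    have h := hcal.le_mul_dist x 0
    rw [map_zero, dist_zero_right, dist_zero_right] at h
    have hco : ‖e x‖ = ‖A i₀ x‖ := by
      rw [← Submodule.norm_coe (e x)]
      congr 1
    rw [hco] at h
    exact h
  set C : H →L[ℂ] H := 1 - (lam k)⁻¹ • A k with hC
  set t : ℂ := ((‖C‖ : ℂ) + 1) * c with htdef
  set z : Fin n → ℂ := fun i => if i = k then -(lam k)⁻¹ else if i = i₀ then t else 0 with hz
  have hzk : z k = -(lam k)⁻¹ := if_pos rfl
  have hzi : z i₀ = t := by simp [hz, hik]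
  have hsupp : ∀ i, i ∉ ({k, i₀} : Finset (Fin n)) → z i = 0 := by
    intro i hi
    simp only [Finset.mem_insert, Finset.mem_singleton, not_or] at hi
    simp [hz, hi.1, hi.2]
  have hzsum : ∑ i, lam i * z i + 1 = 0 := by
    have h' : ∑ i, lam i * z i = ∑ i ∈ ({k, i₀} : Finset (Fin n)), lam i * z i := by
      refine (Finset.sum_subset (Finset.subset_univ _) ?_).symm
      intro i _ hi
      rw [hsupp i hi, mul_zero]
    rw [h', Finset.sum_pair hki, hzk, hzi, h1, zero_mul, add_zero, mul_neg,
      mul_inv_cancel₀ hlk]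
    ring
  have hop : (1 : H →L[ℂ] H) + ∑ i, z i • A i = C + t • A i₀ := by
    have h' : ∑ i, z i • A i = ∑ i ∈ ({k, i₀} : Finset (Fin n)), z i • A i := by
      refine (Finset.sum_subset (Finset.subset_univ _) ?_).symm
      intro i _ hi
      rw [hsupp i hi, zero_smul]
    rw [h', Finset.sum_pair hki, hzk, hzi, hC]
    module
  have hne := hplane z hzsum
  rw [Submodule.ne_bot_iff] at hne
  obtain ⟨x, hx, hx0⟩ := hne
  rw [LinearMap.mem_ker, hop] at hx
  have hxapp : C x + t • A i₀ x = 0 := by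
    simpa using hx
  have heq : t • A i₀ x = -(C x) := by
    linear_combination (norm := abel) hxapp
  have h1' : ‖t‖ * ‖A i₀ x‖ ≤ ‖C‖ * ‖x‖ := by
    calc ‖t‖ * ‖A i₀ x‖ = ‖t • A i₀ x‖ := (norm_smul _ _).symm
      _ = ‖C x‖ := by rw [heq, norm_neg]
      _ ≤ ‖C‖ * ‖x‖ := C.le_opNorm x
  have h2' : ‖x‖ ≤ c * ‖A i₀ x‖ := hc x
  have ht : ‖t‖ = (‖C‖ + 1) * c := by
    have htt : t = (((‖C‖ + 1) * c : ℝ) : ℂ) := by rw [htdef]; push_cast; ring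
    rw [htt, Complex.norm_real, Real.norm_of_nonneg (by positivity)]
  have hxpos : 0 < ‖x‖ := norm_pos_iff.mpr hx0
  have hc0 : (0:ℝ) ≤ (c:ℝ) := c.coe_nonneg
  have hAx : 0 < ‖A i₀ x‖ := by nlinarith
  rw [ht] at h1'
  nlinarith [norm_nonneg C]
end

section
/- Let A and B be N×N complex normal matrices. Then AB = BA if and only if the polynomial det(I + zA + wB) in (z,w) ∈ ℂ² factors as a product of N linear polynomials of the form (1 + λ_k z + μ_k w). -/
open Matrix Complex Finset Polynomial

namespace Stmt13

variable {n m : ℕ}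

/-- Upper triangular predicate. -/
def UT {m : ℕ} (M : Matrix (Fin m) (Fin m) ℂ) : Prop := ∀ i j : Fin m, j < i → M i j = 0

def tri (r : Fin (n+1) → ℂ) (M : Matrix (Fin n) (Fin n) ℂ) :
    Matrix (Fin (n+1)) (Fin (n+1)) ℂ :=
  Matrix.of (Fin.cons r (fun i => Fin.cons 0 (M i)))

@[simp] lemma tri_zero (r : Fin (n+1) → ℂ) (M : Matrix (Fin n) (Fin n) ℂ) :
    tri r M 0 = r := rfl

@[simp] lemma tri_succ_zero (r : Fin (n+1) → ℂ) (M : Matrix (Fin n) (Fin n) ℂ) (i : Fin n) :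
    tri r M i.succ 0 = 0 := by
  show (Fin.cons r (fun i => Fin.cons (0:ℂ) (M i)) : ∀ _ : Fin (n+1), Fin (n+1) → ℂ) i.succ 0 = 0
  rw [Fin.cons_succ, Fin.cons_zero]

@[simp] lemma tri_succ_succ (r : Fin (n+1) → ℂ) (M : Matrix (Fin n) (Fin n) ℂ) (i j : Fin n) :
    tri r M i.succ j.succ = M i j := by
  show (Fin.cons r (fun i => Fin.cons (0:ℂ) (M i)) : ∀ _ : Fin (n+1), Fin (n+1) → ℂ) i.succ j.succ = M i j
  rw [Fin.cons_succ, Fin.cons_succ]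

def embed (M : Matrix (Fin n) (Fin n) ℂ) : Matrix (Fin (n+1)) (Fin (n+1)) ℂ :=
  tri (Pi.single 0 1) M

lemma tri_mul (r s : Fin (n+1) → ℂ) (M P : Matrix (Fin n) (Fin n) ℂ) :
    tri r M * tri s P = tri (Matrix.vecMul r (tri s P)) (M * P) := by
  funext i j
  induction i using Fin.cases with
  | zero => simp [Matrix.mul_apply, Matrix.vecMul, dotProduct]
  | succ i =>
    rw [Matrix.mul_apply, Fin.sum_univ_succ]
    induction j using Fin.cases with
    | zero => simp
    | succ j => simp [Matrix.mul_apply]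

@[simp] lemma embed_conjTranspose (M : Matrix (Fin n) (Fin n) ℂ) :
    (embed M)ᴴ = embed Mᴴ := by
  funext i j
  rw [Matrix.conjTranspose_apply]
  induction i using Fin.cases with
  | zero =>
    induction j using Fin.cases with
    | zero => simp [embed]
    | succ j => simp [embed, Pi.single_apply, (Fin.succ_ne_zero j).symm]
  | succ i =>
    induction j using Fin.cases with
    | zero => simp [embed, Pi.single_apply, Fin.succ_ne_zero i]
    | succ j => simp [embed]

@[simp] lemma embed_mul (M P : Matrix (Fin n) (Fin n) ℂ) :
    embed M * embed P = embed (M * P) := by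
  rw [embed, embed, tri_mul, Matrix.single_one_vecMul, Matrix.row_apply', tri_zero]
  rfl

@[simp] lemma embed_one : embed (1 : Matrix (Fin n) (Fin n) ℂ) = 1 := by
  funext i j
  induction i using Fin.cases with
  | zero =>
    induction j using Fin.cases with
    | zero => simp [embed, Matrix.one_apply]
    | succ j => simp [embed, Matrix.one_apply, (Fin.succ_ne_zero j).symm]
  | succ i =>
    induction j using Fin.cases with
    | zero => simp [embed, Matrix.one_apply, Fin.succ_ne_zero i]
    | succ j => simp [embed, Matrix.one_apply, Fin.succ_inj]

lemma UT_tri (r : Fin (n+1) → ℂ) (M : Matrix (Fin n) (Fin n) ℂ) (hM : UT M) :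
    UT (tri r M) := by
  intro i j hij
  induction i using Fin.cases with
  | zero => exact absurd hij (Fin.not_lt_zero j)
  | succ i =>
    induction j using Fin.cases with
    | zero => simp
    | succ j =>
      rw [tri_succ_succ]
      exact hM i j (by exact_mod_cast Fin.succ_lt_succ_iff.mp hij)

lemma exists_common_eigvec (A B : Matrix (Fin (n+1)) (Fin (n+1)) ℂ) (hAB : A * B = B * A) :
    ∃ (v : Fin (n+1) → ℂ) (α β : ℂ), v ≠ 0 ∧ A *ᵥ v = α • v ∧ B *ᵥ v = β • v := by
  set f := Matrix.toLin' A with hf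
  set g := Matrix.toLin' B with hg
  have hfg : Commute f g := by
    show f * g = g * f
    rw [Module.End.mul_eq_comp, Module.End.mul_eq_comp, hf, hg, ← Matrix.toLin'_mul,
      ← Matrix.toLin'_mul, hAB]
  obtain ⟨α, hα⟩ := Module.End.exists_eigenvalue f
  set W := Module.End.eigenspace f α with hWdef
  have hmap : ∀ x ∈ W, g x ∈ W :=
    fun x hx => Module.End.mapsTo_genEigenspace_of_comm hfg α 1 hx
  haveI : Nontrivial W := Submodule.nontrivial_iff_ne_bot.mpr hα
  obtain ⟨β, hβ⟩ := Module.End.exists_eigenvalue (g.restrict hmap)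
  obtain ⟨x, hx, hx0⟩ := hβ.exists_hasEigenvector
  refine ⟨x.1, α, β, ?_, ?_, ?_⟩
  · simpa using hx0
  · have : f x.1 = α • x.1 := Module.End.mem_eigenspace_iff.mp x.2
    rw [hf, Matrix.toLin'_apply] at this
    exact this
  · have : (g.restrict hmap) x = β • x := Module.End.mem_eigenspace_iff.mp hx
    have h2 : g x.1 = β • x.1 := by
      have := congrArg (Subtype.val) this
      rwa [LinearMap.restrict_coe_apply] at this
    rw [hg, Matrix.toLin'_apply] at h2
    exact h2

lemma exists_unitary_col (v : Fin (n+1) → ℂ) (hv : ∑ i, Complex.normSq (v i) = 1) :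
    ∃ V : Matrix (Fin (n+1)) (Fin (n+1)) ℂ, Vᴴ * V = 1 ∧ (∀ i, V i 0 = v i) := by
  classical
  set v' : EuclideanSpace ℂ (Fin (n+1)) := (WithLp.equiv 2 _).symm v with hv'
  have hnorm : ‖v'‖ = 1 := by
    rw [EuclideanSpace.norm_eq]
    have : ∀ i, ‖v' i‖ ^ 2 = Complex.normSq (v i) := by
      intro i
      rw [← Complex.sq_norm]
      rfl
    simp only [this, hv, Real.sqrt_one]
  have horth : Orthonormal ℂ (Set.restrict {(0 : Fin (n+1))} (fun _ => v')) := by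
    constructor
    · intro i; exact hnorm
    · intro i j hij
      exact absurd (Subtype.ext (by
        have hi := i.2; have hj := j.2
        simp only [Set.mem_singleton_iff] at hi hj
        rw [hi, hj])) hij
  obtain ⟨b, hb⟩ := horth.exists_orthonormalBasis_extension_of_card_eq
    (by simp [finrank_euclideanSpace])
  refine ⟨Matrix.of (fun i j => b j i), ?_, ?_⟩
  · funext j j'
    have := orthonormal_iff_ite.mp b.orthonormal j j'
    rw [PiLp.inner_apply] at this
    simp only [RCLike.inner_apply] at this
    simp only [Matrix.mul_apply, Matrix.conjTranspose_apply, Matrix.of_apply, Matrix.one_apply]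
    simpa [mul_comm] using this
  · intro i
    have h0 : b 0 = v' := hb 0 rfl
    show b 0 i = v i
    rw [h0]
    rfl

lemma conj_embed_tri (U₂ : Matrix (Fin n) (Fin n) ℂ) (r : Fin (n+1) → ℂ)
    (M : Matrix (Fin n) (Fin n) ℂ) :
    (embed U₂)ᴴ * tri r M * embed U₂ = tri (r ᵥ* embed U₂) (U₂ᴴ * M * U₂) := by
  rw [embed_conjTranspose]
  show (tri (Pi.single 0 1) U₂ᴴ) * tri r M * tri (Pi.single 0 1) U₂
      = tri (r ᵥ* tri (Pi.single 0 1) U₂) (U₂ᴴ * M * U₂)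
  rw [tri_mul, Matrix.single_one_vecMul, Matrix.row_apply', tri_zero, tri_mul, Matrix.mul_assoc]

theorem schur : ∀ (m : ℕ) (A B : Matrix (Fin m) (Fin m) ℂ), A * B = B * A →
    ∃ U : Matrix (Fin m) (Fin m) ℂ, Uᴴ * U = 1 ∧ UT (Uᴴ * A * U) ∧ UT (Uᴴ * B * U) := by
  intro m
  induction m with
  | zero =>
    intro A B _
    exact ⟨1, by simp, fun i => i.elim0, fun i => i.elim0⟩
  | succ n ih =>
    intro A B hAB
    obtain ⟨v, α, β, hv0, hAv, hBv⟩ := exists_common_eigvec A B hAB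
    set s : ℝ := ∑ i, Complex.normSq (v i) with hs
    have hs0 : 0 < s := by
      obtain ⟨i, hi⟩ := Function.ne_iff.mp hv0
      exact Finset.sum_pos' (fun j _ => Complex.normSq_nonneg _)
        ⟨i, Finset.mem_univ i, Complex.normSq_pos.mpr hi⟩
    set c : ℂ := (((Real.sqrt s)⁻¹ : ℝ) : ℂ) with hc
    set u : Fin (n+1) → ℂ := c • v with hu
    have hu1 : ∑ i, Complex.normSq (u i) = 1 := by
      have : ∀ i, Complex.normSq (u i) = s⁻¹ * Complex.normSq (v i) := by
        intro i
        rw [hu, Pi.smul_apply, smul_eq_mul, Complex.normSq_mul, hc, Complex.normSq_ofReal,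
          ← Real.sqrt_inv, Real.mul_self_sqrt (by positivity)]
      rw [Finset.sum_congr rfl (fun i _ => this i), ← Finset.mul_sum, ← hs,
        inv_mul_cancel₀ (ne_of_gt hs0)]
    have hAu : A *ᵥ u = α • u := by
      rw [hu, Matrix.mulVec_smul, hAv, smul_comm]
    have hBu : B *ᵥ u = β • u := by
      rw [hu, Matrix.mulVec_smul, hBv, smul_comm]
    obtain ⟨V, hV, hVcol⟩ := exists_unitary_col u hu1
    have hVV : V * Vᴴ = 1 := mul_eq_one_comm.mp hV
    have key : ∀ (M : Matrix (Fin (n+1)) (Fin (n+1)) ℂ) (γ : ℂ), M *ᵥ u = γ • u →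
        ∀ i : Fin n, (Vᴴ * M * V) i.succ 0 = 0 := by
      intro M γ hM i
      have hcol : V *ᵥ Pi.single (0 : Fin (n+1)) (1 : ℂ) = u := by
        rw [Matrix.mulVec_single]
        funext k
        simp [hVcol k]
      have h2 : (Vᴴ * M * V) *ᵥ Pi.single (0 : Fin (n+1)) (1 : ℂ)
          = γ • (Pi.single 0 1 : Fin (n+1) → ℂ) := by
        rw [← Matrix.mulVec_mulVec, hcol, ← Matrix.mulVec_mulVec, hM,
          Matrix.mulVec_smul, ← hcol, Matrix.mulVec_mulVec, hV, Matrix.one_mulVec]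
      rw [Matrix.mulVec_single] at h2
      have h3 := congrFun h2 i.succ
      simpa [Pi.single_apply, Fin.succ_ne_zero i] using h3
    set A₁ := Vᴴ * A * V with hA₁
    set B₁ := Vᴴ * B * V with hB₁
    set A₂ : Matrix (Fin n) (Fin n) ℂ := Matrix.of (fun i j => A₁ i.succ j.succ) with hA₂
    set B₂ : Matrix (Fin n) (Fin n) ℂ := Matrix.of (fun i j => B₁ i.succ j.succ) with hB₂
    have hA₁tri : A₁ = tri (A₁ 0) A₂ := by
      funext i j
      induction i using Fin.cases with
      | zero => rw [tri_zero]
      | succ i =>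
        induction j using Fin.cases with
        | zero => rw [tri_succ_zero]; exact key A α hAu i
        | succ j => rw [tri_succ_succ]; rfl
    have hB₁tri : B₁ = tri (B₁ 0) B₂ := by
      funext i j
      induction i using Fin.cases with
      | zero => rw [tri_zero]
      | succ i =>
        induction j using Fin.cases with
        | zero => rw [tri_succ_zero]; exact key B β hBu i
        | succ j => rw [tri_succ_succ]; rfl
    have hcomm1 : A₁ * B₁ = B₁ * A₁ := by
      rw [hA₁, hB₁]
      calc Vᴴ * A * V * (Vᴴ * B * V) = Vᴴ * (A * B) * V := by
            rw [Matrix.mul_assoc (Vᴴ * A), ← Matrix.mul_assoc V, ← Matrix.mul_assoc V, hVV,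
              Matrix.one_mul, ← Matrix.mul_assoc, ← Matrix.mul_assoc]
        _ = Vᴴ * (B * A) * V := by rw [hAB]
        _ = Vᴴ * B * V * (Vᴴ * A * V) := by
            rw [Matrix.mul_assoc (Vᴴ * B), ← Matrix.mul_assoc V, ← Matrix.mul_assoc V, hVV,
              Matrix.one_mul, ← Matrix.mul_assoc, ← Matrix.mul_assoc]
    have hcomm2 : A₂ * B₂ = B₂ * A₂ := by
      have h1 : tri (A₁ 0) A₂ * tri (B₁ 0) B₂ = tri (B₁ 0) B₂ * tri (A₁ 0) A₂ := by
        rw [← hA₁tri, ← hB₁tri]; exact hcomm1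
      rw [tri_mul, tri_mul] at h1
      funext i j
      have h2 := congrFun (congrFun h1 i.succ) j.succ
      rwa [tri_succ_succ, tri_succ_succ] at h2
    obtain ⟨U₂, hU₂, hUA₂, hUB₂⟩ := ih A₂ B₂ hcomm2
    refine ⟨V * embed U₂, ?_, ?_, ?_⟩
    · rw [Matrix.conjTranspose_mul, Matrix.mul_assoc, ← Matrix.mul_assoc Vᴴ, hV,
        Matrix.one_mul, embed_conjTranspose, embed_mul, hU₂, embed_one]
    · have heq : (V * embed U₂)ᴴ * A * (V * embed U₂)
          = tri ((A₁ 0) ᵥ* embed U₂) (U₂ᴴ * A₂ * U₂) := by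
        rw [Matrix.conjTranspose_mul]
        calc (embed U₂)ᴴ * Vᴴ * A * (V * embed U₂)
            = (embed U₂)ᴴ * (Vᴴ * A * V) * embed U₂ := by
              simp only [Matrix.mul_assoc]
          _ = (embed U₂)ᴴ * tri (A₁ 0) A₂ * embed U₂ := by rw [← hA₁, hA₁tri, tri_zero]
          _ = _ := conj_embed_tri U₂ (A₁ 0) A₂
      rw [heq]
      exact UT_tri _ _ hUA₂
    · have heq : (V * embed U₂)ᴴ * B * (V * embed U₂)
          = tri ((B₁ 0) ᵥ* embed U₂) (U₂ᴴ * B₂ * U₂) := by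
        rw [Matrix.conjTranspose_mul]
        calc (embed U₂)ᴴ * Vᴴ * B * (V * embed U₂)
            = (embed U₂)ᴴ * (Vᴴ * B * V) * embed U₂ := by
              simp only [Matrix.mul_assoc]
          _ = (embed U₂)ᴴ * tri (B₁ 0) B₂ * embed U₂ := by rw [← hB₁, hB₁tri, tri_zero]
          _ = _ := conj_embed_tri U₂ (B₁ 0) B₂
      rw [heq]
      exact UT_tri _ _ hUB₂

noncomputable def frob (M : Matrix (Fin m) (Fin m) ℂ) : ℝ := ∑ i, ∑ j, normSq (M i j)

lemma trace_mul_conjTranspose (M P : Matrix (Fin m) (Fin m) ℂ) :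
    Matrix.trace (M * Pᴴ) = ∑ i, ∑ j, M i j * (starRingEnd ℂ) (P i j) := by
  simp only [Matrix.trace, Matrix.diag, Matrix.mul_apply, Matrix.conjTranspose_apply,
    starRingEnd_apply, Matrix.of_apply]

lemma frob_eq_trace (M : Matrix (Fin m) (Fin m) ℂ) :
    frob M = (Matrix.trace (M * Mᴴ)).re := by
  rw [trace_mul_conjTranspose, frob]
  rw [Complex.re_sum]
  congr 1; funext i
  rw [Complex.re_sum]
  congr 1; funext j
  rw [Complex.mul_conj, Complex.ofReal_re]

lemma frob_conj (U M : Matrix (Fin m) (Fin m) ℂ) (hU : Uᴴ * U = 1) :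
    frob (Uᴴ * M * U) = frob M := by
  have hUU : U * Uᴴ = 1 := mul_eq_one_comm.mp hU
  rw [frob_eq_trace, frob_eq_trace]
  congr 1
  have h1 : (Uᴴ * M * U)ᴴ = Uᴴ * Mᴴ * U := by
    rw [Matrix.conjTranspose_mul, Matrix.conjTranspose_mul, Matrix.conjTranspose_conjTranspose,
      ← Matrix.mul_assoc]
  rw [h1]
  have h2 : Uᴴ * M * U * (Uᴴ * Mᴴ * U) = Uᴴ * (M * Mᴴ) * U := by
    rw [Matrix.mul_assoc (Uᴴ * M), ← Matrix.mul_assoc U, ← Matrix.mul_assoc U, hUU,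
      Matrix.one_mul, ← Matrix.mul_assoc, ← Matrix.mul_assoc]
  rw [h2, Matrix.trace_mul_comm (Uᴴ * (M * Mᴴ)) U, ← Matrix.mul_assoc, hUU, Matrix.one_mul]

lemma diag_le_frob (M : Matrix (Fin m) (Fin m) ℂ) :
    ∑ i, normSq (M i i) ≤ frob M := by
  apply Finset.sum_le_sum
  intro i _
  exact Finset.single_le_sum (fun j _ => Complex.normSq_nonneg (M i j)) (Finset.mem_univ i)

lemma diagonal_of_frob_eq (M : Matrix (Fin m) (Fin m) ℂ)
    (h : frob M = ∑ i, normSq (M i i)) : ∀ i j, i ≠ j → M i j = 0 := by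
  have hrow : ∀ i, ∑ j, normSq (M i j) = normSq (M i i) := by
    by_contra hcon
    push_neg at hcon
    obtain ⟨i, hi⟩ := hcon
    have hlt : ∀ k, normSq (M k k) ≤ ∑ j, normSq (M k j) :=
      fun k => Finset.single_le_sum (fun j _ => Complex.normSq_nonneg (M k j)) (Finset.mem_univ k)
    have : ∑ k, normSq (M k k) < frob M := by
      apply Finset.sum_lt_sum (fun k _ => hlt k) ⟨i, Finset.mem_univ i, lt_of_le_of_ne (hlt i) (fun he => hi he.symm)⟩
    rw [h] at this
    exact lt_irrefl _ this
  intro i j hij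
  have h2 : ∑ j' ∈ Finset.univ.erase i, normSq (M i j') = 0 := by
    have := hrow i
    rw [← Finset.add_sum_erase _ _ (Finset.mem_univ i)] at this
    linarith
  have h3 := (Finset.sum_eq_zero_iff_of_nonneg
    (fun j' _ => Complex.normSq_nonneg (M i j'))).mp h2 j
    (Finset.mem_erase.mpr ⟨hij.symm, Finset.mem_univ j⟩)
  exact Complex.normSq_eq_zero.mp h3

lemma UT_normal_diag (T : Matrix (Fin m) (Fin m) ℂ) (hT : UT T)
    (hN : T * Tᴴ = Tᴴ * T) : ∀ i j, i ≠ j → T i j = 0 := by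
  have main : ∀ k : ℕ, ∀ i : Fin m, (i : ℕ) = k → ∀ j, j ≠ i → T i j = 0 := by
    intro k
    induction k using Nat.strong_induction_on with
    | _ k ih =>
      intro i hik j hj
      have h0 : ((T * Tᴴ) i i).re = ((Tᴴ * T) i i).re := by rw [hN]
      have h1 : ((T * Tᴴ) i i).re = ∑ l, normSq (T i l) := by
        rw [Matrix.mul_apply, Complex.re_sum]
        congr 1; funext l
        rw [Matrix.conjTranspose_apply]
        change (T i l * (starRingEnd ℂ) (T i l)).re = _
        rw [Complex.mul_conj, Complex.ofReal_re]
      have h2 : ((Tᴴ * T) i i).re = normSq (T i i) := by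
        rw [Matrix.mul_apply, Complex.re_sum]
        rw [Finset.sum_eq_single i]
        · rw [Matrix.conjTranspose_apply]
          change ((starRingEnd ℂ) (T i i) * T i i).re = _
          rw [mul_comm, Complex.mul_conj, Complex.ofReal_re]
        · intro l _ hl
          have hTl : T l i = 0 := by
            rcases lt_or_gt_of_ne hl with h | h
            · refine ih (l : ℕ) ?_ l rfl i (Ne.symm hl)
              rw [← hik]
              exact h
            · exact hT l i h
          simp [Matrix.conjTranspose_apply, hTl]
        · intro hi; exact absurd (Finset.mem_univ i) hi
      have h3 : ∑ l, normSq (T i l) = normSq (T i i) := by rw [← h1, h0, h2]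
      have h4 : ∑ l ∈ Finset.univ.erase i, normSq (T i l) = 0 := by
        rw [← Finset.add_sum_erase _ _ (Finset.mem_univ i)] at h3
        linarith
      have h5 := (Finset.sum_eq_zero_iff_of_nonneg
        (fun l _ => Complex.normSq_nonneg (T i l))).mp h4 j
        (Finset.mem_erase.mpr ⟨hj, Finset.mem_univ j⟩)
      exact Complex.normSq_eq_zero.mp h5
  intro i j hij
  exact main (i : ℕ) i rfl j (Ne.symm hij)

lemma normSq_lin_sum {ι : Type*} [Fintype ι] (a b : ι → ℂ) (z w : ℂ) :
    ∑ t, normSq (z * a t + w * b t)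
      = normSq z * ∑ t, normSq (a t) + normSq w * ∑ t, normSq (b t)
        + 2 * (z * (starRingEnd ℂ) w * ∑ t, a t * (starRingEnd ℂ) (b t)).re := by
  have hterm : ∀ t, normSq (z * a t + w * b t)
      = normSq z * normSq (a t) + normSq w * normSq (b t)
        + 2 * (z * (starRingEnd ℂ) w * (a t * (starRingEnd ℂ) (b t))).re := by
    intro t
    have hc0 : z * a t * (starRingEnd ℂ) (w * b t)
        = z * (starRingEnd ℂ) w * (a t * (starRingEnd ℂ) (b t)) := by
      rw [RingHom.map_mul]; ring
    rw [Complex.normSq_add, Complex.normSq_mul, Complex.normSq_mul, hc0]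
  rw [Finset.sum_congr rfl (fun t _ => hterm t)]
  rw [Finset.sum_add_distrib, Finset.sum_add_distrib, ← Finset.mul_sum, ← Finset.mul_sum]
  congr 1
  conv_rhs => rw [Finset.mul_sum, Complex.re_sum, Finset.mul_sum]

lemma det_conj (U M : Matrix (Fin m) (Fin m) ℂ) (hU : Uᴴ * U = 1) :
    (Uᴴ * M * U).det = M.det := by
  rw [Matrix.det_mul, Matrix.det_mul]
  calc Uᴴ.det * M.det * U.det = Uᴴ.det * U.det * M.det := by ring
    _ = (Uᴴ * U).det * M.det := by rw [Matrix.det_mul]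
    _ = M.det := by rw [hU, Matrix.det_one, one_mul]

lemma det_UT (M : Matrix (Fin m) (Fin m) ℂ) (h : UT M) : M.det = ∏ i, M i i :=
  Matrix.det_of_upperTriangular (fun i j hij => h i j hij)

lemma UT_one : UT (1 : Matrix (Fin m) (Fin m) ℂ) :=
  fun i j hij => Matrix.one_apply_ne (ne_of_lt hij).symm

lemma UT_smul (c : ℂ) (M : Matrix (Fin m) (Fin m) ℂ) (h : UT M) : UT (c • M) := by
  intro i j hij
  rw [Matrix.smul_apply, h i j hij, smul_zero]

lemma UT_add (M P : Matrix (Fin m) (Fin m) ℂ) (hM : UT M) (hP : UT P) : UT (M + P) := by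
  intro i j hij
  rw [Matrix.add_apply, hM i j hij, hP i j hij, add_zero]

lemma UT_sub (M P : Matrix (Fin m) (Fin m) ℂ) (hM : UT M) (hP : UT P) : UT (M - P) := by
  intro i j hij
  rw [Matrix.sub_apply, hM i j hij, hP i j hij, sub_zero]

lemma conj_smul_one_sub (U M T : Matrix (Fin m) (Fin m) ℂ) (hU : Uᴴ * U = 1)
    (hT : Uᴴ * M * U = T) (x : ℂ) :
    Uᴴ * (x • (1 : Matrix (Fin m) (Fin m) ℂ) - M) * U = x • 1 - T := by
  rw [Matrix.mul_sub, Matrix.sub_mul, hT, Matrix.mul_smul, Matrix.smul_mul, Matrix.mul_one, hU]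

lemma det_x_sub (M U T : Matrix (Fin m) (Fin m) ℂ) (hU : Uᴴ * U = 1)
    (hT : Uᴴ * M * U = T) (hUT : UT T) (x : ℂ) :
    Matrix.det (x • (1 : Matrix (Fin m) (Fin m) ℂ) - M) = ∏ k, (x - T k k) := by
  rw [← det_conj U (x • (1 : Matrix (Fin m) (Fin m) ℂ) - M) hU,
    conj_smul_one_sub U M T hU hT x,
    det_UT _ (UT_sub _ _ (UT_smul x _ UT_one) hUT)]
  apply Finset.prod_congr rfl
  intro k _
  rw [Matrix.sub_apply, Matrix.smul_apply, Matrix.one_apply_eq, smul_eq_mul, mul_one]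

lemma multiset_map_eq (d a : Fin m → ℂ)
    (h : ∀ x : ℂ, x ≠ 0 → ∏ k, (x - d k) = ∏ k, (x - a k)) :
    Finset.univ.val.map d = Finset.univ.val.map a := by
  classical
  set P : Polynomial ℂ := ∏ k, (X - C (d k)) with hP
  set Q : Polynomial ℂ := ∏ k, (X - C (a k)) with hQ
  have hev : ∀ x : ℂ, x ≠ 0 → P.eval x = Q.eval x := by
    intro x hx
    rw [hP, hQ, Polynomial.eval_prod, Polynomial.eval_prod]
    simpa using h x hx
  have hPQ : P = Q := by
    have hsub : P - Q = 0 := by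
      apply Polynomial.eq_zero_of_infinite_isRoot
      apply Set.Infinite.mono (s := {(0 : ℂ)}ᶜ)
      · intro x hx
        simp only [Set.mem_compl_iff, Set.mem_singleton_iff] at hx
        simp [Polynomial.IsRoot, hev x hx]
      · exact (Set.finite_singleton (0:ℂ)).infinite_compl
    exact sub_eq_zero.mp hsub
  have h1 : P.roots = Finset.univ.val.map d := by
    rw [hP, Finset.prod_eq_multiset_prod]
    have he : (fun k => X - C (d k)) = (fun c => X - C c) ∘ d := rfl
    rw [he, ← Multiset.map_map]
    exact Polynomial.roots_multiset_prod_X_sub_C _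
  have h2 : Q.roots = Finset.univ.val.map a := by
    rw [hQ, Finset.prod_eq_multiset_prod]
    have he : (fun k => X - C (a k)) = (fun c => X - C c) ∘ a := rfl
    rw [he, ← Multiset.map_map]
    exact Polynomial.roots_multiset_prod_X_sub_C _
  rw [← h1, ← h2, hPQ]

lemma sum_normSq_eq (d a : Fin m → ℂ)
    (h : ∀ x : ℂ, x ≠ 0 → ∏ k, (x - d k) = ∏ k, (x - a k)) :
    ∑ k, normSq (d k) = ∑ k, normSq (a k) := by
  have hm := multiset_map_eq d a h
  rw [Finset.sum_eq_multiset_sum, Finset.sum_eq_multiset_sum]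
  have he1 : (fun k => normSq (d k)) = normSq ∘ d := rfl
  have he2 : (fun k => normSq (a k)) = normSq ∘ a := rfl
  rw [he1, he2, ← Multiset.map_map, ← Multiset.map_map, hm]

lemma sandwich (V V' X Y : Matrix (Fin m) (Fin m) ℂ) (h : V' * V = 1) :
    (V * X * V') * (V * Y * V') = V * (X * Y) * V' := by
  calc (V * X * V') * (V * Y * V') = V * X * ((V' * V) * (Y * V')) := by
        simp only [Matrix.mul_assoc]
    _ = V * X * (Y * V') := by rw [h, Matrix.one_mul]
    _ = V * (X * Y) * V' := by simp only [Matrix.mul_assoc]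

lemma unsandwich (U M : Matrix (Fin m) (Fin m) ℂ) (hUU : U * Uᴴ = 1) :
    U * (Uᴴ * M * U) * Uᴴ = M := by
  calc U * (Uᴴ * M * U) * Uᴴ = (U * Uᴴ) * M * (U * Uᴴ) := by simp only [Matrix.mul_assoc]
    _ = M := by rw [hUU, Matrix.one_mul, Matrix.mul_one]

lemma conjT_sandwich (U M : Matrix (Fin m) (Fin m) ℂ) : (Uᴴ * M * U)ᴴ = Uᴴ * Mᴴ * U := by
  rw [Matrix.conjTranspose_mul, Matrix.conjTranspose_mul, Matrix.conjTranspose_conjTranspose,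
    ← Matrix.mul_assoc]

lemma conj_normal (U M : Matrix (Fin m) (Fin m) ℂ) (hU : Uᴴ * U = 1)
    (hM : M * Mᴴ = Mᴴ * M) :
    (Uᴴ * M * U) * (Uᴴ * M * U)ᴴ = (Uᴴ * M * U)ᴴ * (Uᴴ * M * U) := by
  have hUU := mul_eq_one_comm.mp hU
  rw [conjT_sandwich, sandwich _ _ _ _ hUU, sandwich _ _ _ _ hUU, hM]

lemma frob_of_diag (T : Matrix (Fin m) (Fin m) ℂ) (hd : ∀ i j, i ≠ j → T i j = 0) :
    frob T = ∑ i, normSq (T i i) := by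
  rw [frob]
  apply Finset.sum_congr rfl
  intro i _
  rw [Finset.sum_eq_single i (fun j _ hj => by rw [hd i j (Ne.symm hj), Complex.normSq_zero])
    (fun hi => absurd (Finset.mem_univ i) hi)]

lemma conjT_sandwich' (U M : Matrix (Fin m) (Fin m) ℂ) : (U * M * Uᴴ)ᴴ = U * Mᴴ * Uᴴ := by
  rw [Matrix.conjTranspose_mul, Matrix.conjTranspose_mul, Matrix.conjTranspose_conjTranspose,
    ← Matrix.mul_assoc]

lemma normal_of_eq (M U T : Matrix (Fin m) (Fin m) ℂ) (hU : Uᴴ * U = 1)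
    (hT : Uᴴ * M * U = T) (heq : frob M = ∑ k, normSq (T k k)) :
    M * Mᴴ = Mᴴ * M := by
  have hUU := mul_eq_one_comm.mp hU
  have hfT : frob T = ∑ k, normSq (T k k) := by
    have h1 : frob T = frob M := by rw [← hT, frob_conj U M hU]
    rw [h1]; exact heq
  have hd := diagonal_of_frob_eq T hfT
  have hTn : T * Tᴴ = Tᴴ * T := by
    funext i j
    rw [Matrix.mul_apply, Matrix.mul_apply]
    by_cases hij : i = j
    · subst hij
      rw [Finset.sum_eq_single i (fun l _ hl => by rw [hd i l (Ne.symm hl), zero_mul])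
        (fun hi => absurd (Finset.mem_univ i) hi),
        Finset.sum_eq_single i (fun l _ hl => by rw [hd l i hl, mul_zero])
        (fun hi => absurd (Finset.mem_univ i) hi)]
      rw [mul_comm]
    · rw [Finset.sum_eq_zero, Finset.sum_eq_zero]
      · intro l _
        by_cases hl : l = j
        · subst hl
          rw [Matrix.conjTranspose_apply, hd l i (fun he => hij he.symm), star_zero, zero_mul]
        · rw [hd l j hl, mul_zero]
      · intro l _
        by_cases hl : l = i
        · subst hl
          rw [Matrix.conjTranspose_apply, hd j l (fun he => hij he.symm), star_zero, mul_zero]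
        · rw [hd i l (Ne.symm hl), zero_mul]
  have hM : M = U * T * Uᴴ := by rw [← hT, unsandwich U M hUU]
  rw [hM, conjT_sandwich', sandwich U Uᴴ T Tᴴ hU, sandwich U Uᴴ Tᴴ T hU, hTn]

lemma final_step {N : ℕ} (A B : Matrix (Fin N) (Fin N) ℂ)
    (hB : B * Bᴴ = Bᴴ * B) (eX : A * Bᴴ = Bᴴ * A) : A * B = B * A := by
  obtain ⟨U, hU, hTB, -⟩ := schur N B 0 (by simp)
  have hUU := mul_eq_one_comm.mp hU
  set T := Uᴴ * B * U with hT
  have hTn : T * Tᴴ = Tᴴ * T := conj_normal U B hU hB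
  have hd := UT_normal_diag T hTB hTn
  set A' := Uᴴ * A * U with hA'
  have hstep1 : A' * Tᴴ = Tᴴ * A' := by
    calc A' * Tᴴ = (Uᴴ * A * U) * (Uᴴ * Bᴴ * U) := by rw [hA', hT, conjT_sandwich]
      _ = Uᴴ * (A * Bᴴ) * U := sandwich Uᴴ U A Bᴴ hUU
      _ = Uᴴ * (Bᴴ * A) * U := by rw [eX]
      _ = (Uᴴ * Bᴴ * U) * (Uᴴ * A * U) := (sandwich Uᴴ U Bᴴ A hUU).symm
      _ = Tᴴ * A' := by rw [hA', hT, conjT_sandwich]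
  have hstep2 : A' * T = T * A' := by
    funext i j
    rw [Matrix.mul_apply, Matrix.mul_apply]
    rw [Finset.sum_eq_single j (fun l _ hl => by rw [hd l j hl, mul_zero])
      (fun hj => absurd (Finset.mem_univ j) hj)]
    rw [Finset.sum_eq_single i (fun l _ hl => by rw [hd i l (Ne.symm hl), zero_mul])
      (fun hi => absurd (Finset.mem_univ i) hi)]
    by_cases hz : A' i j = 0
    · rw [hz, zero_mul, mul_zero]
    · have hs := congrFun (congrFun hstep1 i) j
      rw [Matrix.mul_apply, Matrix.mul_apply] at hs
      rw [Finset.sum_eq_single j (fun l _ hl => by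
          rw [Matrix.conjTranspose_apply, hd j l (Ne.symm hl), star_zero, mul_zero])
        (fun hj => absurd (Finset.mem_univ j) hj)] at hs
      rw [Finset.sum_eq_single i (fun l _ hl => by
          rw [Matrix.conjTranspose_apply, hd l i hl, star_zero, zero_mul])
        (fun hi => absurd (Finset.mem_univ i) hi)] at hs
      rw [Matrix.conjTranspose_apply, Matrix.conjTranspose_apply] at hs
      have hTij : T j j = T i i := by
        have h5 : A' i j * star (T j j) = A' i j * star (T i i) := by
          rw [hs, mul_comm]
        exact star_injective (mul_left_cancel₀ hz h5)
      rw [hTij, mul_comm]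
  have hAfull : A = U * A' * Uᴴ := by rw [hA', unsandwich U A hUU]
  have hBfull : B = U * T * Uᴴ := by rw [hT, unsandwich U B hUU]
  rw [hAfull, hBfull, sandwich U Uᴴ A' T hU, sandwich U Uᴴ T A' hU, hstep2]


/-- Forward direction. -/
lemma forward {N : ℕ} (A B : Matrix (Fin N) (Fin N) ℂ) (hAB : A * B = B * A) :
    ∃ lam mu : Fin N → ℂ, ∀ z w : ℂ,
      Matrix.det ((1 : Matrix (Fin N) (Fin N) ℂ) + z • A + w • B) =
        ∏ k, (1 + lam k * z + mu k * w) := by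
  obtain ⟨U, hU, hTA, hTB⟩ := schur N A B hAB
  refine ⟨fun k => (Uᴴ * A * U) k k, fun k => (Uᴴ * B * U) k k, fun z w => ?_⟩
  have h1 : Uᴴ * ((1 : Matrix (Fin N) (Fin N) ℂ) + z • A + w • B) * U
      = 1 + z • (Uᴴ * A * U) + w • (Uᴴ * B * U) := by
    rw [Matrix.mul_add, Matrix.mul_add, Matrix.add_mul, Matrix.add_mul, Matrix.mul_one, hU,
      Matrix.mul_smul, Matrix.smul_mul, Matrix.mul_smul, Matrix.smul_mul]
  have hUT : UT ((1 : Matrix (Fin N) (Fin N) ℂ) + z • (Uᴴ * A * U) + w • (Uᴴ * B * U)) :=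
    UT_add _ _ (UT_add _ _ UT_one (UT_smul z _ hTA)) (UT_smul w _ hTB)
  rw [← det_conj U ((1 : Matrix (Fin N) (Fin N) ℂ) + z • A + w • B) hU, h1, det_UT _ hUT]
  apply Finset.prod_congr rfl
  intro k _
  rw [Matrix.add_apply, Matrix.add_apply, Matrix.smul_apply, Matrix.smul_apply,
    Matrix.one_apply_eq, smul_eq_mul, smul_eq_mul]
  ring

/-- Converse direction. -/
lemma converse {N : ℕ} (A B : Matrix (Fin N) (Fin N) ℂ)
    (hA : A * Aᴴ = Aᴴ * A) (hB : B * Bᴴ = Bᴴ * B) (lam mu : Fin N → ℂ)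
    (h : ∀ z w : ℂ, Matrix.det ((1 : Matrix (Fin N) (Fin N) ℂ) + z • A + w • B) =
        ∏ k, (1 + lam k * z + mu k * w)) :
    A * B = B * A := by
  -- determinant identity away from 0
  have hdet : ∀ z w x : ℂ, x ≠ 0 →
      Matrix.det (x • (1 : Matrix (Fin N) (Fin N) ℂ) - (z • A + w • B))
        = ∏ k, (x - (lam k * z + mu k * w)) := by
    intro z w x hx
    have e1 : x • ((1 : Matrix (Fin N) (Fin N) ℂ) + (-z/x) • A + (-w/x) • B)
        = x • (1 : Matrix (Fin N) (Fin N) ℂ) - (z • A + w • B) := by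
      rw [smul_add, smul_add, smul_smul, smul_smul,
        show x * (-z/x) = -z by field_simp, show x * (-w/x) = -w by field_simp,
        neg_smul, neg_smul]
      abel
    rw [← e1, Matrix.det_smul, h (-z/x) (-w/x)]
    rw [show (Fintype.card (Fin N)) = N from Fintype.card_fin N]
    rw [show (x ^ N : ℂ) = ∏ _k : Fin N, x by rw [Finset.prod_const, Finset.card_univ, Fintype.card_fin]]
    rw [← Finset.prod_mul_distrib]
    apply Finset.prod_congr rfl
    intro k _
    field_simp
    ring
  -- For every z w, get a Schur form with matching diagonal sums
  have hsum : ∀ z w : ℂ, ∃ U T : Matrix (Fin N) (Fin N) ℂ, Uᴴ * U = 1 ∧ UT T ∧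
      Uᴴ * (z • A + w • B) * U = T ∧
      ∑ k, normSq (T k k) = ∑ k, normSq (lam k * z + mu k * w) := by
    intro z w
    obtain ⟨U, hU, hT, -⟩ := schur N (z • A + w • B) 0 (by simp)
    refine ⟨U, Uᴴ * (z • A + w • B) * U, hU, hT, rfl, ?_⟩
    apply sum_normSq_eq
    intro x hx
    rw [← det_x_sub (z • A + w • B) U _ hU rfl hT x, hdet z w x hx]
  -- Schur inequality
  have hineq : ∀ z w : ℂ, ∑ k, normSq (lam k * z + mu k * w) ≤ frob (z • A + w • B) := by
    intro z w
    obtain ⟨U, T, hU, hUT, hTdef, hS⟩ := hsum z w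
    rw [← hS, ← frob_conj U (z • A + w • B) hU, hTdef]
    exact diag_le_frob T
  -- expansion of frob
  have hfrobexp : ∀ (z w : ℂ),
      frob (z • A + w • B) = normSq z * frob A + normSq w * frob B
        + 2 * (z * (starRingEnd ℂ) w * Matrix.trace (A * Bᴴ)).re := by
    intro z w
    have e0 : frob (z • A + w • B)
        = ∑ p : Fin N × Fin N, normSq (z * A p.1 p.2 + w * B p.1 p.2) := by
      rw [frob]
      have h1 : (∑ p : Fin N × Fin N, normSq ((z • A + w • B) p.1 p.2))
          = ∑ i, ∑ j, normSq ((z • A + w • B) i j) :=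
        Fintype.sum_prod_type (fun p : Fin N × Fin N => normSq ((z • A + w • B) p.1 p.2))
      rw [← h1]
      apply Finset.sum_congr rfl
      intro p _
      have he : (z • A + w • B) p.1 p.2 = z * A p.1 p.2 + w * B p.1 p.2 := rfl
      rw [he]
    have eX : frob A = ∑ p : Fin N × Fin N, normSq (A p.1 p.2) := by
      rw [frob]
      exact (Fintype.sum_prod_type (fun p : Fin N × Fin N => normSq (A p.1 p.2))).symm
    have eY : frob B = ∑ p : Fin N × Fin N, normSq (B p.1 p.2) := by
      rw [frob]
      exact (Fintype.sum_prod_type (fun p : Fin N × Fin N => normSq (B p.1 p.2))).symm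
    have eT : Matrix.trace (A * Bᴴ)
        = ∑ p : Fin N × Fin N, A p.1 p.2 * (starRingEnd ℂ) (B p.1 p.2) := by
      rw [trace_mul_conjTranspose]
      exact (Fintype.sum_prod_type
        (fun p : Fin N × Fin N => A p.1 p.2 * (starRingEnd ℂ) (B p.1 p.2))).symm
    rw [e0, eX, eY, eT]
    exact normSq_lin_sum _ _ z w
  -- expansion of the model sum
  have hSexp : ∀ z w : ℂ, ∑ k, normSq (lam k * z + mu k * w)
      = normSq z * ∑ k, normSq (lam k) + normSq w * ∑ k, normSq (mu k)
        + 2 * (z * (starRingEnd ℂ) w * ∑ k, lam k * (starRingEnd ℂ) (mu k)).re := by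
    intro z w
    have e0 : ∑ k, normSq (lam k * z + mu k * w) = ∑ k, normSq (z * lam k + w * mu k) := by
      apply Finset.sum_congr rfl
      intro k _
      rw [mul_comm (lam k) z, mul_comm (mu k) w]
    rw [e0]
    exact normSq_lin_sum _ _ z w
  -- diagonal sums for A and B alone
  have keyA : frob A = ∑ k, normSq (lam k) := by
    obtain ⟨U, T, hU, hUT, hTdef, hS⟩ := hsum 1 0
    have hz : (1:ℂ) • A + (0:ℂ) • B = A := by rw [one_smul, zero_smul, add_zero]
    rw [hz] at hTdef
    have hTn : T * Tᴴ = Tᴴ * T := by rw [← hTdef]; exact conj_normal U A hU hA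
    have hd := UT_normal_diag T hUT hTn
    calc frob A = frob T := by rw [← hTdef, frob_conj U A hU]
      _ = ∑ k, normSq (T k k) := frob_of_diag T hd
      _ = ∑ k, normSq (lam k * 1 + mu k * 0) := hS
      _ = ∑ k, normSq (lam k) := by
          apply Finset.sum_congr rfl
          intro k _
          rw [mul_one, mul_zero, add_zero]
  have keyB : frob B = ∑ k, normSq (mu k) := by
    obtain ⟨U, T, hU, hUT, hTdef, hS⟩ := hsum 0 1
    have hz : (0:ℂ) • A + (1:ℂ) • B = B := by rw [one_smul, zero_smul, zero_add]
    rw [hz] at hTdef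
    have hTn : T * Tᴴ = Tᴴ * T := by rw [← hTdef]; exact conj_normal U B hU hB
    have hd := UT_normal_diag T hUT hTn
    calc frob B = frob T := by rw [← hTdef, frob_conj U B hU]
      _ = ∑ k, normSq (T k k) := frob_of_diag T hd
      _ = ∑ k, normSq (lam k * 0 + mu k * 1) := hS
      _ = ∑ k, normSq (mu k) := by
          apply Finset.sum_congr rfl
          intro k _
          rw [mul_one, mul_zero, zero_add]
  -- the cross term vanishes
  set c : ℂ := Matrix.trace (A * Bᴴ) - ∑ k, lam k * (starRingEnd ℂ) (mu k) with hcdef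
  have hpos : ∀ z w : ℂ, 0 ≤ (z * (starRingEnd ℂ) w * c).re := by
    intro z w
    have h1 := hineq z w
    rw [hfrobexp z w, hSexp z w, keyA, keyB] at h1
    have h2 : (z * (starRingEnd ℂ) w * c).re
        = (z * (starRingEnd ℂ) w * Matrix.trace (A * Bᴴ)).re
          - (z * (starRingEnd ℂ) w * ∑ k, lam k * (starRingEnd ℂ) (mu k)).re := by
      rw [hcdef, mul_sub, Complex.sub_re]
    linarith
  have hc0 : c = 0 := by
    have h1 := hpos (-(starRingEnd ℂ) c) 1
    rw [show (starRingEnd ℂ) 1 = 1 from _root_.map_one _, mul_one] at h1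
    have h2 : (-(starRingEnd ℂ) c * c).re = -normSq c := by
      rw [neg_mul, Complex.neg_re, mul_comm, Complex.mul_conj, Complex.ofReal_re]
    rw [h2] at h1
    exact Complex.normSq_eq_zero.mp (le_antisymm (by linarith) (Complex.normSq_nonneg c))
  have htr : Matrix.trace (A * Bᴴ) = ∑ k, lam k * (starRingEnd ℂ) (mu k) :=
    sub_eq_zero.mp (by rw [← hcdef]; exact hc0)
  -- equality for all z w
  have hEq : ∀ z w : ℂ, frob (z • A + w • B) = ∑ k, normSq (lam k * z + mu k * w) := by
    intro z w
    rw [hfrobexp z w, hSexp z w, keyA, keyB, htr]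
  -- normality of A + B and A + iB
  have hnormal : ∀ z w : ℂ, (z • A + w • B) * (z • A + w • B)ᴴ
      = (z • A + w • B)ᴴ * (z • A + w • B) := by
    intro z w
    obtain ⟨U, T, hU, hUT, hTdef, hS⟩ := hsum z w
    have heq : frob (z • A + w • B) = ∑ k, normSq (T k k) := by
      rw [hS]
      exact hEq z w
    exact normal_of_eq (z • A + w • B) U T hU hTdef heq
  have hn1 : (A + B) * (A + B)ᴴ = (A + B)ᴴ * (A + B) := by
    have := hnormal 1 1
    simpa [one_smul] using this
  have hn2 : (A + Complex.I • B) * (A + Complex.I • B)ᴴ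
      = (A + Complex.I • B)ᴴ * (A + Complex.I • B) := by
    have := hnormal 1 Complex.I
    simpa [one_smul] using this
  -- extract A * Bᴴ = Bᴴ * A
  have expL1 : (A + B) * (A + B)ᴴ = A * Aᴴ + B * Bᴴ + (A * Bᴴ + B * Aᴴ) := by
    rw [Matrix.conjTranspose_add, Matrix.add_mul, Matrix.mul_add, Matrix.mul_add]
    abel
  have expR1 : (A + B)ᴴ * (A + B) = Aᴴ * A + Bᴴ * B + (Aᴴ * B + Bᴴ * A) := by
    rw [Matrix.conjTranspose_add, Matrix.add_mul, Matrix.mul_add, Matrix.mul_add]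
    abel
  have e1 : A * Bᴴ + B * Aᴴ = Aᴴ * B + Bᴴ * A := by
    have h1 := hn1
    rw [expL1, expR1, hA, hB] at h1
    exact add_left_cancel h1
  have expL2 : (A + Complex.I • B) * (A + Complex.I • B)ᴴ
      = A * Aᴴ + B * Bᴴ + (Complex.I • (B * Aᴴ) - Complex.I • (A * Bᴴ)) := by
    rw [Matrix.conjTranspose_add, Matrix.conjTranspose_smul, Complex.star_def, Complex.conj_I,
      Matrix.add_mul, Matrix.mul_add, Matrix.mul_add, Matrix.mul_smul, Matrix.smul_mul,
      Matrix.smul_mul, Matrix.mul_smul, smul_smul, mul_neg, Complex.I_mul_I, neg_neg, one_smul,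
      neg_smul]
    abel
  have expR2 : (A + Complex.I • B)ᴴ * (A + Complex.I • B)
      = Aᴴ * A + Bᴴ * B + (Complex.I • (Aᴴ * B) - Complex.I • (Bᴴ * A)) := by
    rw [Matrix.conjTranspose_add, Matrix.conjTranspose_smul, Complex.star_def, Complex.conj_I,
      Matrix.add_mul, Matrix.mul_add, Matrix.mul_add, Matrix.mul_smul, Matrix.smul_mul,
      Matrix.smul_mul, Matrix.mul_smul, smul_smul, neg_mul, Complex.I_mul_I, neg_neg, one_smul,
      neg_smul]
    abel
  have e2' : Complex.I • (B * Aᴴ) - Complex.I • (A * Bᴴ)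
      = Complex.I • (Aᴴ * B) - Complex.I • (Bᴴ * A) := by
    have h2 := hn2
    rw [expL2, expR2, hA, hB] at h2
    exact add_left_cancel h2
  have e2 : B * Aᴴ - A * Bᴴ = Aᴴ * B - Bᴴ * A := by
    have h3 : Complex.I • (B * Aᴴ - A * Bᴴ) = Complex.I • (Aᴴ * B - Bᴴ * A) := by
      rw [smul_sub, smul_sub]
      exact e2'
    exact smul_right_injective _ Complex.I_ne_zero h3
  have e3 : A * Bᴴ + A * Bᴴ = Bᴴ * A + Bᴴ * A := by
    calc A * Bᴴ + A * Bᴴ = (A * Bᴴ + B * Aᴴ) - (B * Aᴴ - A * Bᴴ) := by abel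
      _ = (Aᴴ * B + Bᴴ * A) - (Aᴴ * B - Bᴴ * A) := by rw [e1, e2]
      _ = Bᴴ * A + Bᴴ * A := by abel
  have eX : A * Bᴴ = Bᴴ * A := by
    have h4 : (2:ℂ) • (A * Bᴴ) = (2:ℂ) • (Bᴴ * A) := by
      rw [two_smul, two_smul]
      exact e3
    exact smul_right_injective _ (two_ne_zero) h4
  exact final_step A B hB eX


end Stmt13

theorem stmt13 {N : ℕ} (A B : Matrix (Fin N) (Fin N) ℂ)
    (hA : IsStarNormal A) (hB : IsStarNormal B) :
    Commute A B ↔ ∃ lam mu : Fin N → ℂ, ∀ z w : ℂ,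
      Matrix.det ((1 : Matrix (Fin N) (Fin N) ℂ) + z • A + w • B) =
        ∏ k, (1 + lam k * z + mu k * w) := by
  constructor
  · intro hc
    exact Stmt13.forward A B hc.eq
  · rintro ⟨lam, mu, h⟩
    have hA' : A * Aᴴ = Aᴴ * A := by
      have h1 := hA.star_comm_self.eq
      rw [Matrix.star_eq_conjTranspose] at h1
      exact h1.symm
    have hB' : B * Bᴴ = Bᴴ * B := by
      have h1 := hB.star_comm_self.eq
      rw [Matrix.star_eq_conjTranspose] at h1
      exact h1.symm
    exact Stmt13.converse A B hA' hB' lam mu h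
end
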